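/- Let p : ℚ_p^n → ℝ_{≥0} be continuous, negative definite with p(0) = 0, and suppose e^{−t p(ξ)} ∈ L^1(ℚ_p^n) for each t > 0, with Z_t(x) = ℱ^{−1}_{ξ→x}(e^{−t p(ξ)}) ≥ 0 defining a probability density for each t > 0. Then for u_0 ∈ 𝒟(ℚ_p^n), the function u(x,t) = ∫ χ_p(−x·ξ) e^{−t p(ξ)} û_0(ξ) d^n ξ satisfies: u(·,t) ∈ L^1 ∩ L^2 for every t ≥ 0, u(x,0) = u_0(x), t ↦ u(x,t) is differentiable with ∂u/∂t(x,t) = −∫ χ_p(−x·ξ) p(ξ) e^{−t p(ξ)} û_0(ξ) d^n ξ, and u solves ∂u/∂t = −ℱ^{−1}(p(ξ) ℱ_{x→ξ} u). -/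

import Mathlib

open scoped BigOperators ComplexOrder
open MeasureTheory
set_option linter.unusedSectionVars false
set_option maxHeartbeats 1000000

section Aux
variable {p n : ℕ} [hp : Fact p.Prime] [MeasurableSpace (Fin n → ℚ_[p])]
  [BorelSpace (Fin n → ℚ_[p])]
  (μ : Measure (Fin n → ℚ_[p])) [μ.IsAddHaarMeasure]
  (e : AddChar ℚ_[p] ℂ)

lemma aux_p_pos : (0:ℝ) < (p:ℝ) := by exact_mod_cast hp.out.pos

lemma mem_Bz {x : Fin n → ℚ_[p]} {k : ℤ} :
    x ∈ Metric.closedBall (0 : Fin n → ℚ_[p]) ((p:ℝ)^k) ↔ ∀ i, ‖x i‖ ≤ (p:ℝ)^k := by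
  rw [mem_closedBall_zero_iff, pi_norm_le_iff_of_nonneg (le_of_lt (zpow_pos (aux_p_pos (p := p)) k))]

lemma norm_add_le_iff {a b : ℚ_[p]} {r : ℝ} (hb : ‖b‖ ≤ r) : ‖a + b‖ ≤ r ↔ ‖a‖ ≤ r := by
  constructor
  · intro h
    have h2 : ‖(a + b) + (-b)‖ ≤ max ‖a + b‖ ‖-b‖ := Padic.nonarchimedean _ _
    simpa using h2.trans (max_le h (by simpa using hb))
  · intro h
    exact (Padic.nonarchimedean a b).trans (max_le h hb)

lemma e_eq_one (htriv : ∀ y : ℚ_[p], e y = 1 ↔ ‖y‖ ≤ 1) {k : ℤ} {z w : Fin n → ℚ_[p]}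
    (hz : ∀ i, ‖z i‖ ≤ (p:ℝ)^(-k)) (hw : ∀ i, ‖w i‖ ≤ (p:ℝ)^k) :
    e (∑ i, z i * w i) = 1 := by
  rw [htriv]
  have : ∀ i ∈ Finset.univ, ‖z i * w i‖ ≤ 1 := by
    intro i _
    rw [norm_mul]
    calc ‖z i‖ * ‖w i‖ ≤ (p:ℝ)^(-k) * (p:ℝ)^k :=
          mul_le_mul (hz i) (hw i) (norm_nonneg _) (le_of_lt (zpow_pos (aux_p_pos (p:=p)) _))
      _ = 1 := by
          rw [← zpow_add₀ (ne_of_gt (aux_p_pos (p:=p)))]; simp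
  rcases Finset.eq_empty_or_nonempty (Finset.univ : Finset (Fin n)) with h | h
  · simp [h]
  · exact IsUltrametricDist.norm_sum_le_of_forall_le_of_nonempty h this

lemma orth (he : Continuous e) (htriv : ∀ y : ℚ_[p], e y = 1 ↔ ‖y‖ ≤ 1)
    (k : ℤ) (z : Fin n → ℚ_[p]) :
    ∫ w in Metric.closedBall (0 : Fin n → ℚ_[p]) ((p:ℝ)^k), e (∑ i, z i * w i) ∂μ
      = if ∀ i, ‖z i‖ ≤ (p:ℝ)^(-k) then ((μ (Metric.closedBall (0 : Fin n → ℚ_[p]) ((p:ℝ)^k))).toReal : ℂ)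
        else 0 := by
  set B := Metric.closedBall (0 : Fin n → ℚ_[p]) ((p:ℝ)^k) with hB
  split_ifs with hz
  · rw [setIntegral_congr_fun (measurableSet_closedBall) (g := fun _ => (1:ℂ))
      (fun w hw => e_eq_one e htriv hz (mem_Bz.mp hw))]
    simp [setIntegral_const, measureReal_def, hB]
  · push_neg at hz
    obtain ⟨i, hi⟩ := hz
    set c : ℚ_[p] := (p:ℚ_[p])^(-k) with hc
    have hcnorm : ‖c‖ = (p:ℝ)^k := by rw [hc, Padic.norm_p_zpow]; simp
    set w₀ : Fin n → ℚ_[p] := Pi.single i c with hw₀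
    have hw₀mem : ∀ j, ‖w₀ j‖ ≤ (p:ℝ)^k := by
      intro j
      rcases eq_or_ne j i with rfl | hj
      · simp [hw₀, hcnorm]
      · simp [hw₀, Pi.single_eq_of_ne hj]
        positivity
    have hBshift : ∀ w : Fin n → ℚ_[p], w + w₀ ∈ B ↔ w ∈ B := by
      intro w
      rw [hB, mem_Bz, mem_Bz]
      exact forall_congr' fun j => norm_add_le_iff (hw₀mem j)
    -- the character value of the shift
    have hne : e (z i * c) ≠ 1 := by
      intro h1
      have h2 := (htriv _).mp h1
      rw [norm_mul, hcnorm] at h2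
      have h3 : (p:ℝ)^(-k) * (p:ℝ)^k = 1 := by
        rw [← zpow_add₀ (ne_of_gt (aux_p_pos (p:=p)))]; simp
      have h4 : (1:ℝ) < ‖z i‖ * (p:ℝ)^k := by
        calc (1:ℝ) = (p:ℝ)^(-k) * (p:ℝ)^k := h3.symm
          _ < ‖z i‖ * (p:ℝ)^k := mul_lt_mul_of_pos_right hi (zpow_pos (aux_p_pos (p:=p)) _)
      linarith
    -- shift invariance of the integral
    have key : ∫ w in B, e (∑ j, z j * w j) ∂μ
        = e (z i * c) * ∫ w in B, e (∑ j, z j * w j) ∂μ := by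
      conv_lhs => rw [← integral_indicator (measurableSet_closedBall)]
      rw [← integral_add_right_eq_self (fun w => B.indicator (fun w' => e (∑ j, z j * w' j)) w) w₀]
      have : ∀ w : Fin n → ℚ_[p],
          B.indicator (fun w' => e (∑ j, z j * w' j)) (w + w₀)
            = B.indicator (fun w' => e (z i * c) * e (∑ j, z j * w' j)) w := by
        intro w
        by_cases hw : w ∈ B
        · rw [Set.indicator_of_mem ((hBshift w).mpr hw), Set.indicator_of_mem hw]
          have : ∑ j, z j * (w + w₀) j = (∑ j, z j * w j) + z i * c := by
            simp only [Pi.add_apply, mul_add, Finset.sum_add_distrib]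
            congr 1
            rw [hw₀]
            rw [Finset.sum_eq_single i]
            · simp
            · intro b _ hb
              simp [Pi.single_apply, hb]
            · simp
          rw [this, AddChar.map_add_eq_mul]
          ring
        · rw [Set.indicator_of_notMem (fun h => hw ((hBshift w).mp h)),
            Set.indicator_of_notMem hw]
      simp_rw [this]
      rw [integral_indicator (measurableSet_closedBall)]
      rw [integral_const_mul]
    have := key
    by_contra h0
    have h2 : (1 - e (z i * c)) * ∫ w in B, e (∑ j, z j * w j) ∂μ = 0 := by
      rw [sub_mul, one_mul]
      rw [← key]
      ring
    rcases mul_eq_zero.mp h2 with h3 | h3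
    · exact hne (by linear_combination -h3)
    · exact h0 h3

-- appended to chunk2 content when testing
lemma cont_pair_sum {p n : ℕ} [Fact p.Prime] (e : AddChar ℚ_[p] ℂ) (he : Continuous e) :
    Continuous (fun z : (Fin n → ℚ_[p]) × (Fin n → ℚ_[p]) => e (∑ i, z.1 i * z.2 i)) :=
  he.comp (continuous_finset_sum _ fun i _ =>
    ((continuous_apply i).comp continuous_fst).mul ((continuous_apply i).comp continuous_snd))

lemma mass (he : Continuous e) (hunit : ∀ y, ‖e y‖ = 1)
    (htriv : ∀ y : ℚ_[p], e y = 1 ↔ ‖y‖ ≤ 1)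
    (hnorm : μ (Metric.closedBall 0 1) = 1) (k : ℕ) :
    (μ (Metric.closedBall (0 : Fin n → ℚ_[p]) ((p:ℝ)^(k:ℤ)))).toReal
      * (μ (Metric.closedBall (0 : Fin n → ℚ_[p]) ((p:ℝ)^(-(k:ℤ))))).toReal = 1 := by
  have hp1 : (1:ℝ) ≤ (p:ℝ) := by exact_mod_cast hp.out.one_le
  set A := Metric.closedBall (0 : Fin n → ℚ_[p]) ((p:ℝ)^(k:ℤ)) with hA
  set C1 := Metric.closedBall (0 : Fin n → ℚ_[p]) ((p:ℝ)^(0:ℤ)) with hC1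
  have hC1' : C1 = Metric.closedBall (0 : Fin n → ℚ_[p]) 1 := by rw [hC1, zpow_zero]
  have hμC1 : μ C1 = 1 := by rw [hC1']; exact hnorm
  have hfinA : IsFiniteMeasure (μ.restrict A) :=
    ⟨by rw [Measure.restrict_apply_univ]; exact (isCompact_closedBall _ _).measure_lt_top⟩
  have hfinC : IsFiniteMeasure (μ.restrict C1) :=
    ⟨by rw [Measure.restrict_apply_univ]; exact (isCompact_closedBall _ _).measure_lt_top⟩
  have hintu : Integrable (Function.uncurry fun w η : Fin n → ℚ_[p] => e (∑ i, w i * η i))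
      ((μ.restrict A).prod (μ.restrict C1)) := by
    refine Integrable.mono' (integrable_const 1) ((cont_pair_sum e he).aestronglyMeasurable) ?_
    filter_upwards with z
    simp only [Function.uncurry]
    rw [hunit]
  have hswap : (∫ w in A, ∫ η in C1, e (∑ i, w i * η i) ∂μ ∂μ)
      = ∫ η in C1, ∫ w in A, e (∑ i, w i * η i) ∂μ ∂μ :=
    integral_integral_swap hintu
  -- way 1
  have way1 : (∫ w in A, ∫ η in C1, e (∑ i, w i * η i) ∂μ ∂μ) = 1 := by
    have inner : ∀ w : Fin n → ℚ_[p],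
        (∫ η in C1, e (∑ i, w i * η i) ∂μ)
          = C1.indicator (fun _ => ((μ C1).toReal : ℂ)) w := by
      intro w
      rw [hC1, orth μ e he htriv 0 w]
      by_cases hw : w ∈ C1
      · rw [Set.indicator_of_mem hw, if_pos]
        intro i
        have := (mem_Bz.mp (hC1 ▸ hw)) i
        simpa using this
      · rw [Set.indicator_of_notMem hw, if_neg]
        intro hcon
        exact hw (hC1 ▸ mem_Bz.mpr (by simpa using hcon))
    simp_rw [inner]
    rw [setIntegral_indicator (measurableSet_closedBall)]
    have : A ∩ C1 = C1 := Set.inter_eq_right.mpr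
      (Metric.closedBall_subset_closedBall (zpow_le_zpow_right₀ hp1 (by positivity)))
    rw [this, setIntegral_const, hμC1]
    simp [measureReal_def, hμC1]
  -- way 2
  have way2 : (∫ η in C1, ∫ w in A, e (∑ i, w i * η i) ∂μ ∂μ)
      = ((μ (Metric.closedBall (0 : Fin n → ℚ_[p]) ((p:ℝ)^(-(k:ℤ))))).toReal : ℂ)
        * ((μ A).toReal : ℂ) := by
    have inner : ∀ η : Fin n → ℚ_[p],
        (∫ w in A, e (∑ i, w i * η i) ∂μ)
          = (Metric.closedBall (0 : Fin n → ℚ_[p]) ((p:ℝ)^(-(k:ℤ)))).indicator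
              (fun _ => ((μ A).toReal : ℂ)) η := by
      intro η
      have : ∀ w : Fin n → ℚ_[p], (∑ i, w i * η i) = ∑ i, η i * w i := by
        intro w; exact Finset.sum_congr rfl fun i _ => mul_comm _ _
      simp_rw [this]
      rw [hA, orth μ e he htriv k η]
      by_cases hη : η ∈ Metric.closedBall (0 : Fin n → ℚ_[p]) ((p:ℝ)^(-(k:ℤ)))
      · rw [Set.indicator_of_mem hη, if_pos (mem_Bz.mp hη)]
      · rw [Set.indicator_of_notMem hη, if_neg (fun hcon => hη (mem_Bz.mpr hcon))]
    simp_rw [inner]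
    rw [setIntegral_indicator (measurableSet_closedBall)]
    have : C1 ∩ Metric.closedBall (0 : Fin n → ℚ_[p]) ((p:ℝ)^(-(k:ℤ)))
        = Metric.closedBall (0 : Fin n → ℚ_[p]) ((p:ℝ)^(-(k:ℤ))) :=
      Set.inter_eq_right.mpr (Metric.closedBall_subset_closedBall
        (zpow_le_zpow_right₀ hp1 (by omega)))
    rw [this, setIntegral_const]
    simp [measureReal_def]
  have : ((μ (Metric.closedBall (0 : Fin n → ℚ_[p]) ((p:ℝ)^(-(k:ℤ))))).toReal : ℂ)
      * ((μ A).toReal : ℂ) = 1 := by rw [← way2, ← hswap, way1]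
  have h2 : ((μ (Metric.closedBall (0 : Fin n → ℚ_[p]) ((p:ℝ)^(-(k:ℤ))))).toReal
      * (μ A).toReal : ℝ) = 1 := by exact_mod_cast this
  linarith [h2]

lemma mem_ball_a {a η : Fin n → ℚ_[p]} {k : ℤ} :
    η ∈ Metric.closedBall a ((p:ℝ)^k) ↔ ∀ i, ‖a i - η i‖ ≤ (p:ℝ)^k := by
  rw [mem_closedBall_iff_norm, pi_norm_le_iff_of_nonneg (le_of_lt (zpow_pos (aux_p_pos (p:=p)) k))]
  exact forall_congr' fun i => by rw [Pi.sub_apply, norm_sub_rev]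

lemma measure_ball_a (a : Fin n → ℚ_[p]) (r : ℝ) :
    μ (Metric.closedBall a r) = μ (Metric.closedBall 0 r) := by
  have hpre : (fun h => a + h) ⁻¹' Metric.closedBall a r = Metric.closedBall 0 r := by
    ext x
    simp [Metric.mem_closedBall, dist_eq_norm]
  rw [← hpre, measure_preimage_add]

lemma master (he : Continuous e) (hunit : ∀ y, ‖e y‖ = 1)
    (htriv : ∀ y : ℚ_[p], e y = 1 ↔ ‖y‖ ≤ 1)
    (hnorm : μ (Metric.closedBall 0 1) = 1)
    (h F : (Fin n → ℚ_[p]) → ℂ) (hh : Integrable h μ) (hc : Continuous h)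
    (hF : ∀ w, F w = ∫ η, e (-(∑ i, η i * w i)) * h η ∂μ) (hFi : Integrable F μ)
    (a : Fin n → ℚ_[p]) :
    ∫ w, e (∑ i, a i * w i) * F w ∂μ = h a := by
  have hp1 : (1:ℝ) ≤ (p:ℝ) := by exact_mod_cast hp.out.one_le
  set Bk : ℕ → Set (Fin n → ℚ_[p]) :=
    fun k => Metric.closedBall 0 ((p:ℝ)^(k:ℤ)) with hBk
  set S : ℕ → Set (Fin n → ℚ_[p]) :=
    fun k => Metric.closedBall a ((p:ℝ)^(-(k:ℤ))) with hS
  have hGint : Integrable (fun w => e (∑ i, a i * w i) * F w) μ := by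
    refine hFi.bdd_mul (c := 1) ?_ (Filter.Eventually.of_forall fun w => le_of_eq (hunit _))
    exact (he.comp (continuous_finset_sum _ fun i _ => (continuous_const.mul
      (continuous_apply i)))).aestronglyMeasurable
  have hmono : Monotone Bk := fun k l hkl =>
    Metric.closedBall_subset_closedBall (zpow_le_zpow_right₀ hp1 (by exact_mod_cast hkl))
  have hunion : (⋃ k, Bk k) = Set.univ := by
    rw [Set.eq_univ_iff_forall]
    intro x
    obtain ⟨k, hk⟩ := exists_nat_gt ‖x‖
    have hk2 : (k:ℝ) ≤ (p:ℝ)^(k:ℤ) := by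
      rw [zpow_natCast]
      calc (k:ℝ) ≤ (2:ℝ)^k := by exact_mod_cast Nat.le_of_lt (Nat.lt_two_pow_self (n := k))
        _ ≤ (p:ℝ)^k := by
            apply pow_le_pow_left₀ (by norm_num)
            exact_mod_cast hp.out.two_le
    exact Set.mem_iUnion.mpr ⟨k, mem_closedBall_zero_iff.mpr (le_trans (le_of_lt hk) hk2)⟩
  have htends : Filter.Tendsto (fun k => ∫ w in Bk k, e (∑ i, a i * w i) * F w ∂μ)
      Filter.atTop (nhds (∫ w, e (∑ i, a i * w i) * F w ∂μ)) := by
    have := tendsto_setIntegral_of_monotone (fun k => measurableSet_closedBall) hmono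
      (by rw [hunion]; exact hGint.integrableOn)
    rwa [hunion, setIntegral_univ] at this
  -- step ii : identify the truncated integral
  have hstep2 : ∀ k : ℕ, (∫ w in Bk k, e (∑ i, a i * w i) * F w ∂μ)
      = ((μ (Bk k)).toReal : ℂ) * ∫ η in S k, h η ∂μ := by
    intro k
    haveI hfinBk : IsFiniteMeasure (μ.restrict (Bk k)) :=
      ⟨by rw [Measure.restrict_apply_univ]; exact (isCompact_closedBall _ _).measure_lt_top⟩
    have hcomb : ∀ w η : Fin n → ℚ_[p],
        e (∑ i, a i * w i) * (e (-(∑ i, η i * w i)) * h η)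
          = e (∑ i, (a i - η i) * w i) * h η := by
      intro w η
      rw [← mul_assoc, ← AddChar.map_add_eq_mul]
      congr 2
      simp only [sub_mul, Finset.sum_sub_distrib]
      ring
    have hswap : (∫ w in Bk k, ∫ η, e (∑ i, a i * w i) * (e (-(∑ i, η i * w i)) * h η) ∂μ ∂μ)
        = ∫ η, ∫ w in Bk k, e (∑ i, a i * w i) * (e (-(∑ i, η i * w i)) * h η) ∂μ ∂μ := by
      apply integral_integral_swap
      have hmeas : Continuous (fun z : (Fin n → ℚ_[p]) × (Fin n → ℚ_[p]) =>
          e (∑ i, a i * z.1 i) * (e (-(∑ i, z.2 i * z.1 i)) * h z.2)) := by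
        apply Continuous.mul
        · exact he.comp (continuous_finset_sum _ fun i _ => continuous_const.mul
            ((continuous_apply i).comp continuous_fst))
        · apply Continuous.mul
          · exact he.comp (Continuous.neg (continuous_finset_sum _ fun i _ =>
              ((continuous_apply i).comp continuous_snd).mul
                ((continuous_apply i).comp continuous_fst)))
          · exact hc.comp continuous_snd
      have hbdd : Integrable (fun z : (Fin n → ℚ_[p]) × (Fin n → ℚ_[p]) => ‖h z.2‖)
          ((μ.restrict (Bk k)).prod μ) := by
        have := (integrable_const (1:ℝ) : Integrable _ (μ.restrict (Bk k))).mul_prod hh.norm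
        simpa using this
      refine Integrable.mono' hbdd hmeas.aestronglyMeasurable ?_
      filter_upwards with z
      simp only [Function.uncurry, norm_mul, hunit, one_mul]
      exact le_refl _
    calc (∫ w in Bk k, e (∑ i, a i * w i) * F w ∂μ)
        = ∫ w in Bk k, ∫ η, e (∑ i, a i * w i) * (e (-(∑ i, η i * w i)) * h η) ∂μ ∂μ := by
          apply setIntegral_congr_fun measurableSet_closedBall
          intro w _
          dsimp only
          rw [hF w, integral_const_mul]
      _ = ∫ η, ∫ w in Bk k, e (∑ i, a i * w i) * (e (-(∑ i, η i * w i)) * h η) ∂μ ∂μ := hswap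
      _ = ∫ η, (S k).indicator (fun _ => ((μ (Bk k)).toReal : ℂ)) η * h η ∂μ := by
          apply integral_congr_ae
          filter_upwards with η
          simp_rw [hcomb]
          rw [integral_mul_const]
          congr 1
          rw [hBk]
          have horth := orth μ e he htriv (k:ℤ) (a - η)
          simp only [Pi.sub_apply] at horth
          rw [horth]
          by_cases hη : η ∈ S k
          · rw [if_pos, Set.indicator_of_mem hη]
            exact mem_ball_a.mp hη
          · rw [if_neg, Set.indicator_of_notMem hη]
            exact fun hcon => hη (mem_ball_a.mpr hcon)
      _ = ((μ (Bk k)).toReal : ℂ) * ∫ η in S k, h η ∂μ := by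
          rw [← integral_indicator measurableSet_closedBall, ← integral_const_mul]
          apply integral_congr_ae
          filter_upwards with η
          by_cases hη : η ∈ S k
          · rw [Set.indicator_of_mem hη, Set.indicator_of_mem hη]
          · rw [Set.indicator_of_notMem hη, Set.indicator_of_notMem hη, zero_mul, mul_zero]
  -- step iii : the limit of the right hand side
  have hstep3 : Filter.Tendsto (fun k => ((μ (Bk k)).toReal : ℂ) * ∫ η in S k, h η ∂μ)
      Filter.atTop (nhds (h a)) := by
    have hmass : ∀ k : ℕ, (μ (Bk k)).toReal * (μ (S k)).toReal = 1 := by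
      intro k
      rw [hS]
      simp only
      rw [measure_ball_a μ a]
      exact mass μ e he hunit htriv hnorm k
    rw [Metric.tendsto_atTop]
    intro ε hε
    obtain ⟨δ, hδ, hδ2⟩ := Metric.continuous_iff.mp hc a (ε/2) (by linarith)
    obtain ⟨N, hN⟩ : ∃ N : ℕ, (p:ℝ)^(-(N:ℤ)) < δ := by
      have h1 : |(p:ℝ)⁻¹| < 1 := by
        rw [abs_of_pos (by positivity)]
        rw [inv_lt_one_iff₀]
        right; exact_mod_cast hp.out.one_lt
      obtain ⟨N, hN⟩ := exists_pow_lt_of_lt_one hδ (by rw [abs_of_pos (by positivity)] at h1; exact h1)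
      exact ⟨N, by rw [zpow_neg, zpow_natCast, ← inv_pow]; exact hN⟩
    refine ⟨N, fun k hk => ?_⟩
    have hrk : (p:ℝ)^(-(k:ℤ)) < δ := by
      refine lt_of_le_of_lt ?_ hN
      apply zpow_le_zpow_right₀ hp1
      omega
    have hSfin : μ (S k) < ⊤ := (isCompact_closedBall _ _).measure_lt_top
    haveI : IsFiniteMeasure (μ.restrict (S k)) :=
      ⟨by rw [Measure.restrict_apply_univ]; exact hSfin⟩
    have hsub : (∫ η in S k, h η ∂μ) - ((μ (S k)).toReal : ℂ) * h a
        = ∫ η in S k, (h η - h a) ∂μ := by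
      rw [integral_sub hh.integrableOn (integrable_const _)]
      rw [setIntegral_const]
      simp [Complex.real_smul, measureReal_def]
    have hbound : ‖(∫ η in S k, (h η - h a) ∂μ)‖ ≤ (ε/2) * (μ (S k)).toReal := by
      apply norm_setIntegral_le_of_norm_le_const hSfin
      · intro η hη
        have : dist η a < δ := lt_of_le_of_lt (Metric.mem_closedBall.mp hη) hrk
        have := hδ2 η this
        rw [dist_eq_norm] at this
        exact le_of_lt this
    have hck : (0:ℝ) ≤ (μ (Bk k)).toReal := ENNReal.toReal_nonneg
    calc dist (((μ (Bk k)).toReal : ℂ) * ∫ η in S k, h η ∂μ) (h a)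
        = ‖((μ (Bk k)).toReal : ℂ) * ((∫ η in S k, h η ∂μ) - ((μ (S k)).toReal : ℂ) * h a)‖ := by
          rw [dist_eq_norm]
          congr 1
          have : ((μ (Bk k)).toReal : ℂ) * (((μ (S k)).toReal : ℂ) * h a) = h a := by
            rw [← mul_assoc]
            norm_cast
            rw [hmass k]
            simp
          rw [mul_sub, this]
      _ = (μ (Bk k)).toReal * ‖(∫ η in S k, (h η - h a) ∂μ)‖ := by
          rw [norm_mul, hsub]
          simp
      _ ≤ (μ (Bk k)).toReal * ((ε/2) * (μ (S k)).toReal) :=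
          mul_le_mul_of_nonneg_left hbound hck
      _ = (ε/2) * ((μ (Bk k)).toReal * (μ (S k)).toReal) := by ring
      _ = ε/2 := by rw [hmass k]; ring
      _ < ε := by linarith
  exact tendsto_nhds_unique (htends.congr (fun k => (hstep2 k))) hstep3

lemma exists_pow_bound (r : ℝ) : ∃ k : ℕ, r ≤ (p:ℝ)^(k:ℤ) := by
  obtain ⟨k, hk⟩ := exists_nat_gt r
  refine ⟨k, le_trans (le_of_lt hk) ?_⟩
  rw [zpow_natCast]
  calc (k:ℝ) ≤ (2:ℝ)^k := by exact_mod_cast Nat.le_of_lt (Nat.lt_two_pow_self (n := k))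
    _ ≤ (p:ℝ)^k := by
        apply pow_le_pow_left₀ (by norm_num)
        exact_mod_cast hp.out.two_le

lemma cont_of_unif_const (f : (Fin n → ℚ_[p]) → ℂ) (m : ℤ)
    (hf : ∀ x y : Fin n → ℚ_[p], (∀ i, ‖x i - y i‖ ≤ (p:ℝ)^m) → f x = f y) :
    Continuous f := by
  rw [continuous_iff_continuousAt]
  intro x
  have hev : f =ᶠ[nhds x] fun _ => f x := by
    apply Filter.eventuallyEq_of_mem
      (Metric.closedBall_mem_nhds x (zpow_pos (aux_p_pos (p:=p)) m))
    intro y hy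
    exact (hf x y (mem_ball_a.mp hy)).symm
  exact hev.continuousAt

lemma unif_const (u₀ : (Fin n → ℚ_[p]) → ℂ) (hlc : IsLocallyConstant u₀)
    (hcs : HasCompactSupport u₀) :
    ∃ m : ℕ, ∀ x y : Fin n → ℚ_[p], (∀ i, ‖x i - y i‖ ≤ (p:ℝ)^(-(m:ℤ))) → u₀ x = u₀ y := by
  obtain ⟨R, hR⟩ := hcs.isBounded.subset_closedBall 0
  obtain ⟨k₀, hk₀⟩ := exists_pow_bound (p:=p) R
  have hsupp : tsupport u₀ ⊆ Metric.closedBall 0 ((p:ℝ)^(k₀:ℤ)) :=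
    hR.trans (Metric.closedBall_subset_closedBall hk₀)
  -- for each x choose a radius of local constancy
  have hloc : ∀ x : Fin n → ℚ_[p], ∃ m : ℕ,
      ∀ y, (∀ i, ‖x i - y i‖ ≤ (p:ℝ)^(-(m:ℤ))) → u₀ y = u₀ x := by
    intro x
    have hopen := hlc.isOpen_fiber (u₀ x)
    obtain ⟨ε, hε, hball⟩ := Metric.isOpen_iff.mp hopen x rfl
    obtain ⟨N, hN⟩ : ∃ N : ℕ, (p:ℝ)^(-(N:ℤ)) < ε := by
      have h1 : (p:ℝ)⁻¹ < 1 := by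
        rw [inv_lt_one_iff₀]; right; exact_mod_cast hp.out.one_lt
      obtain ⟨N, hN⟩ := exists_pow_lt_of_lt_one hε h1
      exact ⟨N, by rw [zpow_neg, zpow_natCast, ← inv_pow]; exact hN⟩
    refine ⟨N, fun y hy => ?_⟩
    have : y ∈ Metric.ball x ε := by
      apply lt_of_le_of_lt _ hN
      exact Metric.mem_closedBall.mp (mem_ball_a.mpr hy)
    exact hball this
  choose m hm using hloc
  set K := Metric.closedBall (0 : Fin n → ℚ_[p]) ((p:ℝ)^(k₀:ℤ)) with hK
  have hKc : IsCompact K := isCompact_closedBall _ _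
  have hUopen : ∀ x : Fin n → ℚ_[p],
      IsOpen (Metric.closedBall x ((p:ℝ)^(-(m x:ℤ)))) := by
    intro x
    rw [closedBall_pi x (le_of_lt (zpow_pos (aux_p_pos (p:=p)) _))]
    exact isOpen_set_pi Set.finite_univ
      (fun i _ => IsUltrametricDist.isOpen_closedBall _
        (ne_of_gt (zpow_pos (aux_p_pos (p:=p)) _)))
  have hcover : K ⊆ ⋃ x ∈ K, Metric.closedBall x ((p:ℝ)^(-(m x:ℤ))) := by
    intro x hx
    exact Set.mem_biUnion hx (Metric.mem_closedBall_self (le_of_lt (zpow_pos (aux_p_pos (p:=p)) _)))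
  obtain ⟨t, hts, htfin, htcover⟩ := hKc.elim_finite_subcover_image (fun x _ => hUopen x) hcover
  set M : ℕ := htfin.toFinset.sup m with hM
  refine ⟨M, fun x y hxy => ?_⟩
  by_cases hxK : x ∈ K
  · obtain ⟨z, hz, hxz⟩ := Set.mem_iUnion₂.mp (htcover hxK)
    have hmz : m z ≤ M := by
      rw [hM]
      exact Finset.le_sup (htfin.mem_toFinset.mpr hz)
    have hpm : (p:ℝ)^(-(M:ℤ)) ≤ (p:ℝ)^(-(m z:ℤ)) := by
      apply zpow_le_zpow_right₀ (by exact_mod_cast hp.out.one_le)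
      omega
    have hzx : ∀ i, ‖z i - x i‖ ≤ (p:ℝ)^(-(m z:ℤ)) := mem_ball_a.mp hxz
    have hzy : ∀ i, ‖z i - y i‖ ≤ (p:ℝ)^(-(m z:ℤ)) := by
      intro i
      have : z i - y i = (z i - x i) + (x i - y i) := by ring
      rw [this]
      exact (Padic.nonarchimedean _ _).trans
        (max_le (hzx i) (le_trans (hxy i) hpm))
    rw [hm z x hzx, hm z y hzy]
  · have hx0 : u₀ x = 0 := image_eq_zero_of_notMem_tsupport (fun hc => hxK (hsupp hc))
    have hy0 : u₀ y = 0 := by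
      apply image_eq_zero_of_notMem_tsupport
      intro hyc
      apply hxK
      have hy : ∀ i, ‖y i‖ ≤ (p:ℝ)^(k₀:ℤ) := mem_Bz.mp (hsupp hyc)
      rw [hK]
      apply mem_Bz.mpr
      intro i
      have : x i = (x i - y i) + y i := by ring
      rw [this]
      refine (Padic.nonarchimedean _ _).trans (max_le ?_ (hy i))
      refine le_trans (hxy i) ?_
      calc (p:ℝ)^(-(M:ℤ)) ≤ (p:ℝ)^(0:ℤ) :=
            zpow_le_zpow_right₀ (by exact_mod_cast hp.out.one_le) (by omega)
        _ ≤ (p:ℝ)^(k₀:ℤ) :=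
            zpow_le_zpow_right₀ (by exact_mod_cast hp.out.one_le) (by omega)
    rw [hx0, hy0]

lemma shift_vanish (htriv : ∀ y : ℚ_[p], e y = 1 ↔ ‖y‖ ≤ 1)
    (u₀ u₀hat : (Fin n → ℚ_[p]) → ℂ)
    (hu₀hat : ∀ ξ, u₀hat ξ = ∫ y, e (∑ i, ξ i * y i) * u₀ y ∂μ)
    (m : ℕ) (hm : ∀ x y : Fin n → ℚ_[p], (∀ i, ‖x i - y i‖ ≤ (p:ℝ)^(-(m:ℤ))) → u₀ x = u₀ y) :
    ∀ ξ : Fin n → ℚ_[p], ¬ (∀ i, ‖ξ i‖ ≤ (p:ℝ)^(m:ℤ)) → u₀hat ξ = 0 := by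
  intro ξ hξ
  push_neg at hξ
  obtain ⟨i, hi⟩ := hξ
  set c : ℚ_[p] := (p:ℚ_[p])^((m:ℤ)) with hc
  have hcnorm : ‖c‖ = (p:ℝ)^(-(m:ℤ)) := by rw [hc, Padic.norm_p_zpow]
  set w₀ : Fin n → ℚ_[p] := Pi.single i c with hw₀
  have hne : e (ξ i * c) ≠ 1 := by
    intro h1
    have h2 := (htriv _).mp h1
    rw [norm_mul, hcnorm] at h2
    have h3 : (p:ℝ)^(m:ℤ) * (p:ℝ)^(-(m:ℤ)) = 1 := by
      rw [← zpow_add₀ (ne_of_gt (aux_p_pos (p:=p)))]; simp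
    have h4 : (1:ℝ) < ‖ξ i‖ * (p:ℝ)^(-(m:ℤ)) := by
      calc (1:ℝ) = (p:ℝ)^(m:ℤ) * (p:ℝ)^(-(m:ℤ)) := h3.symm
        _ < ‖ξ i‖ * (p:ℝ)^(-(m:ℤ)) :=
            mul_lt_mul_of_pos_right hi (zpow_pos (aux_p_pos (p:=p)) _)
    linarith
  have key : u₀hat ξ = e (ξ i * c) * u₀hat ξ := by
    conv_lhs => rw [hu₀hat ξ,
      ← integral_add_right_eq_self (fun y => e (∑ j, ξ j * y j) * u₀ y) w₀]
    have hpt : ∀ y : Fin n → ℚ_[p],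
        e (∑ j, ξ j * (y + w₀) j) * u₀ (y + w₀)
          = e (ξ i * c) * (e (∑ j, ξ j * y j) * u₀ y) := by
      intro y
      have hsum : ∑ j, ξ j * (y + w₀) j = (∑ j, ξ j * y j) + ξ i * c := by
        simp only [Pi.add_apply, mul_add, Finset.sum_add_distrib]
        congr 1
        rw [hw₀, Finset.sum_eq_single i]
        · simp
        · intro b _ hb
          simp [Pi.single_apply, hb]
        · simp
      have hu : u₀ (y + w₀) = u₀ y := by
        apply hm
        intro j
        rw [Pi.add_apply, add_sub_cancel_left]
        rcases eq_or_ne j i with rfl | hj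
        · simp [hw₀, hcnorm]
        · simp [hw₀, Pi.single_eq_of_ne hj]
      rw [hsum, AddChar.map_add_eq_mul, hu]
      ring
    simp_rw [hpt]
    rw [integral_const_mul, ← hu₀hat ξ]
  by_contra h0
  have h2 : (1 - e (ξ i * c)) * u₀hat ξ = 0 := by
    rw [sub_mul, one_mul, ← key]
    ring
  rcases mul_eq_zero.mp h2 with h3 | h3
  · exact hne (by linear_combination -h3)
  · exact h0 h3

lemma hat_loc_const (htriv : ∀ y : ℚ_[p], e y = 1 ↔ ‖y‖ ≤ 1)
    (u₀ u₀hat : (Fin n → ℚ_[p]) → ℂ)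
    (hu₀hat : ∀ ξ, u₀hat ξ = ∫ y, e (∑ i, ξ i * y i) * u₀ y ∂μ)
    (k₀ : ℕ) (hsupp : ∀ y : Fin n → ℚ_[p], ¬ (∀ i, ‖y i‖ ≤ (p:ℝ)^(k₀:ℤ)) → u₀ y = 0) :
    ∀ ξ ξ' : Fin n → ℚ_[p], (∀ i, ‖ξ i - ξ' i‖ ≤ (p:ℝ)^(-(k₀:ℤ))) → u₀hat ξ = u₀hat ξ' := by
  intro ξ ξ' hd
  rw [hu₀hat, hu₀hat]
  apply integral_congr_ae
  filter_upwards with y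
  by_cases hy : u₀ y = 0
  · rw [hy, mul_zero, mul_zero]
  · have hyb : ∀ i, ‖y i‖ ≤ (p:ℝ)^(k₀:ℤ) := by
      by_contra h
      exact hy (hsupp y h)
    congr 1
    have hsplit : ∑ i, ξ i * y i = (∑ i, (ξ i - ξ' i) * y i) + ∑ i, ξ' i * y i := by
      simp only [sub_mul, Finset.sum_sub_distrib]
      ring
    rw [hsplit, AddChar.map_add_eq_mul, e_eq_one e htriv hd hyb, one_mul]


lemma norm_cexp_neg_mul (t r : ℝ) : ‖Complex.exp (-(t:ℂ) * ((r:ℝ):ℂ))‖ = Real.exp (-(t*r)) := by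
  rw [show -(t:ℂ) * ((r:ℝ):ℂ) = ((-(t*r):ℝ):ℂ) by push_cast; ring]
  rw [Complex.norm_exp_ofReal]


end Aux

def IsNegativeDefinite {p n : ℕ} [Fact p.Prime] (ψ : (Fin n → ℚ_[p]) → ℂ) : Prop :=
  ∀ m : ℕ, 0 < m → ∀ x : Fin m → (Fin n → ℚ_[p]), ∀ l : Fin m → ℂ,
    0 ≤ ∑ i, ∑ j,
      (ψ (x i) + (starRingEnd ℂ) (ψ (x j)) - ψ (x i - x j)) * l i * (starRingEnd ℂ) (l j)

theorem stmt_19 {p n : ℕ} [Fact p.Prime]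
    [MeasurableSpace (Fin n → ℚ_[p])] [BorelSpace (Fin n → ℚ_[p])]
    (μ : Measure (Fin n → ℚ_[p])) [μ.IsAddHaarMeasure]
    (hnorm : μ (Metric.closedBall 0 1) = 1)
    (e : AddChar ℚ_[p] ℂ) (he : Continuous e) (hunit : ∀ y, ‖e y‖ = 1)
    (htriv : ∀ y : ℚ_[p], e y = 1 ↔ ‖y‖ ≤ 1)
    (P : (Fin n → ℚ_[p]) → ℝ) (hPc : Continuous P) (hPpos : ∀ ξ, 0 ≤ P ξ)
    (hPneg : IsNegativeDefinite (fun ξ => (P ξ : ℂ))) (hP0 : P 0 = 0)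
    (hint : ∀ t : ℝ, 0 < t →
      Integrable (fun ξ : Fin n → ℚ_[p] => Real.exp (-t * P ξ)) μ)
    -- the heat kernel `Z_t` is a nonnegative probability density
    (hZpos : ∀ t : ℝ, 0 < t → ∀ x : Fin n → ℚ_[p],
      0 ≤ ∫ ξ, e (-(∑ i, ξ i * x i)) * Complex.exp (-(t : ℂ) * (P ξ : ℝ)) ∂μ)
    (hZprob : ∀ t : ℝ, 0 < t →
      (∫ x : Fin n → ℚ_[p],
        (∫ ξ, e (-(∑ i, ξ i * x i)) * Complex.exp (-(t : ℂ) * (P ξ : ℝ)) ∂μ).re ∂μ) = 1)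
    (u₀ : (Fin n → ℚ_[p]) → ℂ) (hlc : IsLocallyConstant u₀) (hcs : HasCompactSupport u₀)
    (u₀hat : (Fin n → ℚ_[p]) → ℂ)
    (hu₀hat : ∀ ξ, u₀hat ξ = ∫ y, e (∑ i, ξ i * y i) * u₀ y ∂μ)
    (u : (Fin n → ℚ_[p]) → ℝ → ℂ)
    (hu : ∀ x t, u x t =
      ∫ ξ, e (-(∑ i, ξ i * x i)) * Complex.exp (-(t : ℂ) * (P ξ : ℝ)) * u₀hat ξ ∂μ) :
    (∀ t : ℝ, 0 ≤ t →
        Integrable (fun x => u x t) μ ∧ MemLp (fun x => u x t) 2 μ) ∧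
    (∀ x, u x 0 = u₀ x) ∧
    (∀ x : Fin n → ℚ_[p], ∀ t : ℝ, 0 ≤ t →
      HasDerivWithinAt (fun s => u x s)
        (-(∫ ξ, e (-(∑ i, ξ i * x i)) *
            ((P ξ : ℂ) * Complex.exp (-(t : ℂ) * (P ξ : ℝ)) * u₀hat ξ) ∂μ))
        (Set.Ici 0) t) ∧
    (∀ x : Fin n → ℚ_[p], ∀ t : ℝ, 0 ≤ t →
      HasDerivWithinAt (fun s => u x s)
        (-(∫ ξ, e (-(∑ i, ξ i * x i)) *
            ((P ξ : ℂ) * ∫ y, e (∑ i, ξ i * y i) * u y t ∂μ) ∂μ))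
        (Set.Ici 0) t) := by
  obtain ⟨m, hm⟩ := unif_const u₀ hlc hcs
  have hppos : (0:ℝ) < (p:ℝ) := aux_p_pos
  have hu₀c : Continuous u₀ := hlc.continuous
  have hu₀i : Integrable u₀ μ := hu₀c.integrable_of_hasCompactSupport hcs
  obtain ⟨R, hR⟩ := hcs.isBounded.subset_closedBall 0
  obtain ⟨k₀, hk₀⟩ := exists_pow_bound (p:=p) R
  have hsupp0 : ∀ y : Fin n → ℚ_[p], ¬ (∀ i, ‖y i‖ ≤ (p:ℝ)^(k₀:ℤ)) → u₀ y = 0 := by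
    intro y hy
    apply image_eq_zero_of_notMem_tsupport
    intro hyt
    exact hy (mem_Bz.mp (Metric.closedBall_subset_closedBall hk₀ (hR hyt)))
  have hhat0 : ∀ ξ : Fin n → ℚ_[p], ¬ (∀ i, ‖ξ i‖ ≤ (p:ℝ)^(m:ℤ)) → u₀hat ξ = 0 :=
    shift_vanish μ e htriv u₀ u₀hat hu₀hat m hm
  have hhatlc := hat_loc_const μ e htriv u₀ u₀hat hu₀hat k₀ hsupp0
  have hhatc : Continuous u₀hat := cont_of_unif_const u₀hat (-(k₀:ℤ)) hhatlc
  have hhatcs : HasCompactSupport u₀hat := by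
    apply IsCompact.of_isClosed_subset
      (isCompact_closedBall (0 : Fin n → ℚ_[p]) ((p:ℝ)^(m:ℤ))) (isClosed_tsupport _)
    apply closure_minimal _ Metric.isClosed_closedBall
    intro ξ hξ
    rw [Function.mem_support] at hξ
    refine mem_Bz.mpr ?_
    by_contra h
    exact hξ (hhat0 ξ h)
  have hhati : Integrable u₀hat μ := hhatc.integrable_of_hasCompactSupport hhatcs
  set Cb : ℝ := ∫ ξ, ‖u₀hat ξ‖ ∂μ with hCb
  -- maximum of P on the support of u₀hat
  obtain ⟨ξ₀, hξ₀mem, hξ₀max⟩ := (isCompact_closedBall (0 : Fin n → ℚ_[p])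
    ((p:ℝ)^(m:ℤ))).exists_isMaxOn ⟨0, Metric.mem_closedBall_self (by positivity)⟩
    hPc.continuousOn
  set CP : ℝ := P ξ₀ with hCPdef
  have hCP0 : (0:ℝ) ≤ CP := by
    have := hξ₀max (Metric.mem_closedBall_self (by positivity))
    simpa [hP0] using this
  have hCP : ∀ ξ : Fin n → ℚ_[p], u₀hat ξ ≠ 0 → P ξ ≤ CP := by
    intro ξ hξ
    apply hξ₀max
    refine mem_Bz.mpr ?_
    by_contra h
    exact hξ (hhat0 ξ h)
  -- uniform local constancy of u ( · , t)
  have hulc : ∀ t : ℝ, ∀ x x' : Fin n → ℚ_[p],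
      (∀ i, ‖x i - x' i‖ ≤ (p:ℝ)^(-(m:ℤ))) → u x t = u x' t := by
    intro t x x' hxx
    rw [hu x t, hu x' t]
    apply integral_congr_ae
    filter_upwards with ξ
    by_cases hξ : u₀hat ξ = 0
    · rw [hξ, mul_zero, mul_zero]
    · have hξb : ∀ i, ‖ξ i‖ ≤ (p:ℝ)^(m:ℤ) := by
        by_contra h; exact hξ (hhat0 ξ h)
      have h1 : e (∑ i, (x' i - x i) * ξ i) = 1 :=
        e_eq_one e htriv (fun i => by rw [norm_sub_rev]; exact hxx i) hξb
      have h2 : -(∑ i, ξ i * x i) = (∑ i, (x' i - x i) * ξ i) + -(∑ i, ξ i * x' i) := by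
        simp only [sub_mul, Finset.sum_sub_distrib]
        have hc1 : ∑ i, x' i * ξ i = ∑ i, ξ i * x' i :=
          Finset.sum_congr rfl fun i _ => mul_comm _ _
        have hc2 : ∑ i, x i * ξ i = ∑ i, ξ i * x i :=
          Finset.sum_congr rfl fun i _ => mul_comm _ _
        rw [hc1, hc2]
        ring
      rw [h2, AddChar.map_add_eq_mul, h1, one_mul]
  have hucont : ∀ t : ℝ, Continuous (fun x => u x t) :=
    fun t => cont_of_unif_const _ _ (hulc t)
  have hubdd : ∀ t : ℝ, 0 ≤ t → ∀ x, ‖u x t‖ ≤ Cb := by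
    intro t ht x
    rw [hu x t]
    refine le_trans (norm_integral_le_integral_norm _) ?_
    rw [hCb]
    apply integral_mono_of_nonneg
    · filter_upwards with ξ; positivity
    · exact hhati.norm
    · filter_upwards with ξ
      rw [norm_mul, norm_mul, hunit, one_mul]
      have hexp : ‖Complex.exp (-(t:ℂ) * ((P ξ : ℝ):ℂ))‖ ≤ 1 := by
        rw [norm_cexp_neg_mul]
        apply Real.exp_le_one_iff.mpr
        have := hPpos ξ
        nlinarith
      calc ‖Complex.exp (-(t:ℂ) * ((P ξ : ℝ):ℂ))‖ * ‖u₀hat ξ‖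
          ≤ 1 * ‖u₀hat ξ‖ := mul_le_mul_of_nonneg_right hexp (norm_nonneg _)
        _ = ‖u₀hat ξ‖ := one_mul _
  -- inversion at t = 0
  have claim2 : ∀ x, u x 0 = u₀ x := by
    intro x
    have hFeq : ∀ w, u₀hat w = ∫ η, e (-(∑ i, η i * w i)) * u₀ (-η) ∂μ := by
      intro w
      rw [hu₀hat w, ← integral_neg_eq_self (fun η => e (-(∑ i, η i * w i)) * u₀ (-η)) μ]
      apply integral_congr_ae
      filter_upwards with y
      simp only [Pi.neg_apply, neg_mul, Finset.sum_neg_distrib, neg_neg]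
      congr 2
      exact Finset.sum_congr rfl fun i _ => mul_comm _ _
    have hmaster := master μ e he hunit htriv hnorm (fun η => u₀ (-η)) u₀hat
      (hu₀i.comp_neg) (hu₀c.comp continuous_neg) hFeq hhati (-x)
    rw [hu x 0]
    calc (∫ ξ, e (-(∑ i, ξ i * x i)) * Complex.exp (-((0:ℝ):ℂ) * ((P ξ : ℝ):ℂ)) * u₀hat ξ ∂μ)
        = ∫ w, e (∑ i, (-x) i * w i) * u₀hat w ∂μ := by
          apply integral_congr_ae
          filter_upwards with ξ
          have hexp1 : Complex.exp (-((0:ℝ):ℂ) * ((P ξ : ℝ):ℂ)) = 1 := by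
            simp
          rw [hexp1, mul_one]
          congr 2
          simp only [Pi.neg_apply, neg_mul, Finset.sum_neg_distrib]
          congr 1
          exact Finset.sum_congr rfl fun i _ => mul_comm _ _
      _ = u₀ (-(-x)) := hmaster
      _ = u₀ x := by rw [neg_neg]
    -- KEY block for t > 0 : integrability and the Fourier transform identity
  have key : ∀ t : ℝ, 0 < t → Integrable (fun x => u x t) μ ∧
      ∀ ξ : Fin n → ℚ_[p], (∫ y, e (∑ i, ξ i * y i) * u y t ∂μ)
        = Complex.exp (-(t:ℂ) * ((P ξ : ℝ):ℂ)) * u₀hat ξ := by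
    intro t ht
    set Et : (Fin n → ℚ_[p]) → ℂ := fun η => Complex.exp (-(t:ℂ) * ((P η : ℝ):ℂ)) with hEt
    have hEtc : Continuous Et :=
      Complex.continuous_exp.comp (continuous_const.mul (Complex.continuous_ofReal.comp hPc))
    have hEti : Integrable Et μ := by
      refine (hint t ht).mono' hEtc.aestronglyMeasurable ?_
      filter_upwards with ξ
      have hn : ‖Et ξ‖ = Real.exp (-t * P ξ) := by
        simp only [hEt]
        rw [norm_cexp_neg_mul, neg_mul]
      exact le_of_eq hn
    set Z : (Fin n → ℚ_[p]) → ℂ := fun w => ∫ η, e (-(∑ i, η i * w i)) * Et η ∂μ with hZdef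
    have hZpos' : ∀ w, 0 ≤ Z w := by intro w; exact hZpos t ht w
    have hZreal : ∀ w, ((Z w).re : ℂ) = Z w := by
      intro w
      have h := (Complex.nonneg_iff).mp (hZpos' w)
      apply Complex.ext
      · simp
      · simp [← h.2]
    have hZre_int : Integrable (fun w => (Z w).re) μ := by
      by_contra hcon
      have h2 : (∫ x, (Z x).re ∂μ) = 1 := hZprob t ht
      rw [integral_undef hcon] at h2
      norm_num at h2
    have hZint : Integrable Z μ := (hZre_int.ofReal (𝕜 := ℂ)).congr
      (by filter_upwards with w; exact hZreal w)
    -- convolution representation of u(·,t)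
    have hconv : ∀ y : Fin n → ℚ_[p], u y t = ∫ z, u₀ z * Z (y - z) ∂μ := by
      intro y
      rw [hu y t]
      have hprod : Integrable (Function.uncurry fun ξ z : Fin n → ℚ_[p] =>
          e (-(∑ i, ξ i * y i)) * Et ξ * (e (∑ i, ξ i * z i) * u₀ z)) (μ.prod μ) := by
        have hmaj : Integrable (fun q : (Fin n → ℚ_[p]) × (Fin n → ℚ_[p]) =>
            ‖Et q.1‖ * ‖u₀ q.2‖) (μ.prod μ) := hEti.norm.mul_prod hu₀i.norm
        refine hmaj.mono' ?_ ?_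
        · apply Continuous.aestronglyMeasurable
          refine Continuous.mul (Continuous.mul ?_ (hEtc.comp continuous_fst)) ?_
          · exact he.comp (Continuous.neg (continuous_finset_sum _ fun i _ =>
              ((continuous_apply i).comp continuous_fst).mul continuous_const))
          · refine Continuous.mul ?_ (hu₀c.comp continuous_snd)
            exact he.comp (continuous_finset_sum _ fun i _ =>
              ((continuous_apply i).comp continuous_fst).mul
                ((continuous_apply i).comp continuous_snd))
        · filter_upwards with q
          simp only [Function.uncurry, norm_mul, hunit, one_mul]
          exact le_refl _
      calc (∫ ξ, e (-(∑ i, ξ i * y i)) * Complex.exp (-(t:ℂ) * ((P ξ : ℝ):ℂ)) * u₀hat ξ ∂μ)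
          = ∫ ξ, ∫ z, e (-(∑ i, ξ i * y i)) * Et ξ * (e (∑ i, ξ i * z i) * u₀ z) ∂μ ∂μ := by
            apply integral_congr_ae; filter_upwards with ξ
            rw [hu₀hat ξ]
            exact (integral_const_mul _ _).symm
        _ = ∫ z, ∫ ξ, e (-(∑ i, ξ i * y i)) * Et ξ * (e (∑ i, ξ i * z i) * u₀ z) ∂μ ∂μ :=
            integral_integral_swap hprod
        _ = ∫ z, u₀ z * Z (y - z) ∂μ := by
            apply integral_congr_ae; filter_upwards with z
            have hpt : ∀ ξ : Fin n → ℚ_[p],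
                e (-(∑ i, ξ i * y i)) * Et ξ * (e (∑ i, ξ i * z i) * u₀ z)
                  = u₀ z * (e (-(∑ i, ξ i * (y - z) i)) * Et ξ) := by
              intro ξ
              have hchar : e (-(∑ i, ξ i * y i)) * e (∑ i, ξ i * z i)
                  = e (-(∑ i, ξ i * (y - z) i)) := by
                rw [← AddChar.map_add_eq_mul]
                congr 1
                simp only [Pi.sub_apply, mul_sub, Finset.sum_sub_distrib]
                ring
              calc e (-(∑ i, ξ i * y i)) * Et ξ * (e (∑ i, ξ i * z i) * u₀ z)
                  = (e (-(∑ i, ξ i * y i)) * e (∑ i, ξ i * z i)) * Et ξ * u₀ z := by ring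
                _ = u₀ z * (e (-(∑ i, ξ i * (y - z) i)) * Et ξ) := by rw [hchar]; ring
            simp_rw [hpt]
            rw [integral_const_mul]
    have hcvi : Integrable (fun q : (Fin n → ℚ_[p]) × (Fin n → ℚ_[p]) =>
        u₀ q.2 * Z (q.1 - q.2)) (μ.prod μ) := by
      have := Integrable.convolution_integrand (𝕜 := ℂ) (ContinuousLinearMap.mul ℂ ℂ) hu₀i hZint
      simpa using this
    have huInt : Integrable (fun x => u x t) μ := by
      refine (hcvi.integral_prod_left).congr ?_
      filter_upwards with y
      exact (hconv y).symm
    refine ⟨huInt, ?_⟩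
    intro ξ
    have hmaster2 : (∫ w, e (∑ i, ξ i * w i) * Z w ∂μ) = Et ξ :=
      master μ e he hunit htriv hnorm Et Z hEti hEtc (fun w => rfl) hZint ξ
    calc (∫ y, e (∑ i, ξ i * y i) * u y t ∂μ)
        = ∫ y, ∫ z, e (∑ i, ξ i * y i) * (u₀ z * Z (y - z)) ∂μ ∂μ := by
          apply integral_congr_ae; filter_upwards with y
          rw [hconv y]
          exact (integral_const_mul _ _).symm
      _ = ∫ z, ∫ y, e (∑ i, ξ i * y i) * (u₀ z * Z (y - z)) ∂μ ∂μ := by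
          apply integral_integral_swap
          refine Integrable.bdd_mul (c := 1) hcvi ?_ (Filter.Eventually.of_forall fun q => le_of_eq (hunit _))
          apply Continuous.aestronglyMeasurable
          exact he.comp (continuous_finset_sum _ fun i _ =>
            continuous_const.mul ((continuous_apply i).comp continuous_fst))
      _ = ∫ z, u₀ z * (e (∑ i, ξ i * z i) * Et ξ) ∂μ := by
          apply integral_congr_ae; filter_upwards with z
          have h1 : ∀ y : Fin n → ℚ_[p], e (∑ i, ξ i * y i) * (u₀ z * Z (y - z))
              = u₀ z * (e (∑ i, ξ i * y i) * Z (y - z)) := fun y => by ring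
          simp_rw [h1]
          rw [integral_const_mul]
          congr 1
          rw [← integral_add_right_eq_self (fun y => e (∑ i, ξ i * y i) * Z (y - z)) z]
          have h2 : ∀ y : Fin n → ℚ_[p], e (∑ i, ξ i * (y + z) i) * Z (y + z - z)
              = e (∑ i, ξ i * z i) * (e (∑ i, ξ i * y i) * Z y) := by
            intro y
            rw [add_sub_cancel_right]
            have h3 : ∑ i, ξ i * (y + z) i = (∑ i, ξ i * z i) + ∑ i, ξ i * y i := by
              simp only [Pi.add_apply, mul_add, Finset.sum_add_distrib]; ring
            rw [h3, AddChar.map_add_eq_mul]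
            ring
          simp_rw [h2]
          rw [integral_const_mul, hmaster2]
      _ = Complex.exp (-(t:ℂ) * ((P ξ : ℝ):ℂ)) * u₀hat ξ := by
          have h3 : ∀ z : Fin n → ℚ_[p], u₀ z * (e (∑ i, ξ i * z i) * Et ξ)
              = Et ξ * (e (∑ i, ξ i * z i) * u₀ z) := fun z => by ring
          simp_rw [h3]
          rw [integral_const_mul, ← hu₀hat ξ]
  -- derivative in t, valid at every real t
  have hderiv : ∀ (x : Fin n → ℚ_[p]) (t : ℝ), HasDerivAt (fun s => u x s)
      (-(∫ ξ, e (-(∑ i, ξ i * x i)) *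
          ((P ξ : ℂ) * Complex.exp (-(t:ℂ) * ((P ξ : ℝ):ℂ)) * u₀hat ξ) ∂μ)) t := by
    intro x t
    have hecont : Continuous (fun ξ : Fin n → ℚ_[p] => e (-(∑ i, ξ i * x i))) :=
      he.comp (Continuous.neg (continuous_finset_sum _ fun i _ =>
        (continuous_apply i).mul continuous_const))
    have hexpc : ∀ s : ℝ, Continuous (fun ξ : Fin n → ℚ_[p] =>
        Complex.exp (-(s:ℂ) * ((P ξ : ℝ):ℂ))) := fun s =>
      Complex.continuous_exp.comp (continuous_const.mul (Complex.continuous_ofReal.comp hPc))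
    have hmeasF : ∀ s : ℝ, AEStronglyMeasurable (fun ξ : Fin n → ℚ_[p] =>
        e (-(∑ i, ξ i * x i)) * Complex.exp (-(s:ℂ) * ((P ξ : ℝ):ℂ)) * u₀hat ξ) μ := fun s =>
      ((hecont.mul (hexpc s)).mul hhatc).aestronglyMeasurable
    have hFint : ∀ s : ℝ, Integrable (fun ξ : Fin n → ℚ_[p] =>
        e (-(∑ i, ξ i * x i)) * Complex.exp (-(s:ℂ) * ((P ξ : ℝ):ℂ)) * u₀hat ξ) μ := by
      intro s
      refine (hhati.norm.const_mul (Real.exp (|s| * CP))).mono' (hmeasF s) ?_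
      filter_upwards with ξ
      rw [norm_mul, norm_mul, hunit, one_mul, norm_cexp_neg_mul]
      by_cases hξ : u₀hat ξ = 0
      · rw [hξ, norm_zero, mul_zero, mul_zero]
      · have h1 : P ξ ≤ CP := hCP ξ hξ
        apply mul_le_mul_of_nonneg_right _ (norm_nonneg _)
        apply Real.exp_le_exp.mpr
        calc -(s * P ξ) ≤ |s * P ξ| := neg_le_abs _
          _ = |s| * P ξ := by rw [abs_mul, abs_of_nonneg (hPpos ξ)]
          _ ≤ |s| * CP := mul_le_mul_of_nonneg_left h1 (abs_nonneg s)
    have hmeasF' : AEStronglyMeasurable (fun ξ : Fin n → ℚ_[p] =>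
        -(e (-(∑ i, ξ i * x i)) *
          ((P ξ : ℂ) * Complex.exp (-(t:ℂ) * ((P ξ : ℝ):ℂ)) * u₀hat ξ))) μ := by
      apply Continuous.aestronglyMeasurable
      exact (hecont.mul (((Complex.continuous_ofReal.comp hPc).mul (hexpc t)).mul hhatc)).neg
    have hboundint : Integrable (fun ξ : Fin n → ℚ_[p] =>
        (CP * Real.exp ((|t|+1) * CP)) * ‖u₀hat ξ‖) μ := hhati.norm.const_mul _
    have hblem : ∀ᵐ ξ ∂μ, ∀ s ∈ Metric.ball t 1,
        ‖-(e (-(∑ i, ξ i * x i)) *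
          ((P ξ : ℂ) * Complex.exp (-(s:ℂ) * ((P ξ : ℝ):ℂ)) * u₀hat ξ))‖
          ≤ (CP * Real.exp ((|t|+1) * CP)) * ‖u₀hat ξ‖ := by
      filter_upwards with ξ
      intro s hs
      rw [norm_neg, norm_mul, hunit, one_mul, norm_mul, norm_mul, norm_cexp_neg_mul]
      by_cases hξ : u₀hat ξ = 0
      · rw [hξ, norm_zero, mul_zero, mul_zero]
      · have h1 : P ξ ≤ CP := hCP ξ hξ
        have hs1 : |s| ≤ |t| + 1 := by
          have hd := Metric.mem_ball.mp hs
          rw [Real.dist_eq] at hd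
          calc |s| = |t + (s - t)| := by ring_nf
            _ ≤ |t| + |s - t| := abs_add_le _ _
            _ ≤ |t| + 1 := by linarith [le_of_lt hd]
        have hnormP : ‖((P ξ : ℝ):ℂ)‖ = P ξ := by
          rw [Complex.norm_real, Real.norm_eq_abs, abs_of_nonneg (hPpos ξ)]
        rw [hnormP]
        apply mul_le_mul_of_nonneg_right _ (norm_nonneg _)
        have hexp : Real.exp (-(s * P ξ)) ≤ Real.exp ((|t|+1) * CP) := by
          apply Real.exp_le_exp.mpr
          calc -(s * P ξ) ≤ |s * P ξ| := neg_le_abs _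
            _ = |s| * P ξ := by rw [abs_mul, abs_of_nonneg (hPpos ξ)]
            _ ≤ (|t|+1) * CP := by
                apply mul_le_mul hs1 h1 (hPpos ξ)
                linarith [abs_nonneg t]
        exact mul_le_mul h1 hexp (Real.exp_nonneg _) hCP0
    have hderivae : ∀ᵐ ξ ∂μ, ∀ s ∈ Metric.ball t 1,
        HasDerivAt (fun s' : ℝ =>
            e (-(∑ i, ξ i * x i)) * Complex.exp (-(s':ℂ) * ((P ξ : ℝ):ℂ)) * u₀hat ξ)
          (-(e (-(∑ i, ξ i * x i)) *
            ((P ξ : ℂ) * Complex.exp (-(s:ℂ) * ((P ξ : ℝ):ℂ)) * u₀hat ξ))) s := by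
      filter_upwards with ξ
      intro s hs
      have h1 : HasDerivAt (fun s' : ℝ => ((s':ℝ):ℂ)) 1 s := by
        simpa using (hasDerivAt_id s).ofReal_comp
      have h2 : HasDerivAt (fun s' : ℝ => -(s':ℂ) * ((P ξ : ℝ):ℂ)) (-((P ξ : ℝ):ℂ)) s := by
        have := (h1.neg).mul_const ((P ξ : ℝ):ℂ)
        simpa using this
      have h3 := h2.cexp
      have h4 := (h3.const_mul (e (-(∑ i, ξ i * x i)))).mul_const (u₀hat ξ)
      exact h4.congr_deriv (by ring)
    have hres := hasDerivAt_integral_of_dominated_loc_of_deriv_le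
      (F := fun (s : ℝ) (ξ : Fin n → ℚ_[p]) =>
        e (-(∑ i, ξ i * x i)) * Complex.exp (-(s:ℂ) * ((P ξ : ℝ):ℂ)) * u₀hat ξ)
      (F' := fun (s : ℝ) (ξ : Fin n → ℚ_[p]) =>
        -(e (-(∑ i, ξ i * x i)) *
          ((P ξ : ℂ) * Complex.exp (-(s:ℂ) * ((P ξ : ℝ):ℂ)) * u₀hat ξ)))
      (x₀ := t) (Metric.ball_mem_nhds t one_pos) (Filter.Eventually.of_forall fun s => hmeasF s) (hFint t)
      hmeasF' hblem hboundint hderivae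
    have hres2 := hres.2
    rw [integral_neg] at hres2
    have hfun : (fun s : ℝ => ∫ ξ, e (-(∑ i, ξ i * x i)) *
        Complex.exp (-(s:ℂ) * ((P ξ : ℝ):ℂ)) * u₀hat ξ ∂μ) = fun s => u x s :=
      funext fun s => (hu x s).symm
    rwa [hfun] at hres2
  refine ⟨?_, claim2, ?_, ?_⟩
  · intro t ht
    have hInt : Integrable (fun x => u x t) μ := by
      rcases eq_or_lt_of_le ht with h | h
      · have hfun : (fun x => u x t) = u₀ := funext fun x => by rw [← h, claim2 x]
        rw [hfun]; exact hu₀i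
      · exact (key t h).1
    refine ⟨hInt, ?_⟩
    rw [memLp_two_iff_integrable_sq_norm (hucont t).aestronglyMeasurable]
    refine (hInt.norm.const_mul Cb).mono' ?_ ?_
    · exact ((hucont t).norm.pow 2).aestronglyMeasurable
    · filter_upwards with x
      have h1 : ‖u x t‖ ≤ Cb := hubdd t ht x
      have h2 : (0:ℝ) ≤ ‖u x t‖ := norm_nonneg _
      rw [Real.norm_eq_abs, abs_of_nonneg (by positivity)]
      calc ‖u x t‖^2 = ‖u x t‖ * ‖u x t‖ := sq (‖u x t‖)
        _ ≤ Cb * ‖u x t‖ := mul_le_mul_of_nonneg_right h1 h2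
  · intro x t ht
    exact (hderiv x t).hasDerivWithinAt
  · intro x t ht
    have hFT : ∀ ξ : Fin n → ℚ_[p], (∫ y, e (∑ i, ξ i * y i) * u y t ∂μ)
        = Complex.exp (-(t:ℂ) * ((P ξ : ℝ):ℂ)) * u₀hat ξ := by
      rcases eq_or_lt_of_le ht with h | h
      · intro ξ
        rw [← h]
        have h0 : (∫ y, e (∑ i, ξ i * y i) * u y 0 ∂μ)
            = ∫ y, e (∑ i, ξ i * y i) * u₀ y ∂μ := by
          apply integral_congr_ae; filter_upwards with y
          rw [claim2 y]
        rw [h0, ← hu₀hat ξ]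
        simp
      · exact (key t h).2
    have heq : (∫ ξ, e (-(∑ i, ξ i * x i)) *
          ((P ξ : ℂ) * ∫ y, e (∑ i, ξ i * y i) * u y t ∂μ) ∂μ)
        = ∫ ξ, e (-(∑ i, ξ i * x i)) *
          ((P ξ : ℂ) * Complex.exp (-(t:ℂ) * ((P ξ : ℝ):ℂ)) * u₀hat ξ) ∂μ := by
      apply integral_congr_ae; filter_upwards with ξ
      rw [hFT ξ]
      ring
    rw [heq]
    exact (hderiv x t).hasDerivWithinAt
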